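/- arXiv:2009.08147 — 4 statements merged into one kernel-verified Lean document; each statement's English description precedes it below -/
import Mathlib

section
/- Let X be a proper metric space, i : X → X̄ a coarse compactification with boundary ∂X = X̄ ∖ i(X), and let π ⊆ ∂X be a subset that is both open and closed in the subspace ∂X. Then there exist subsets C, D ⊆ X with C ∪ D = X, ¬(C ≍ D), π contained in the closure of i(C) in X̄, and ∂X ∖ π contained in the closure of i(D) in X̄. -/
open Topology

/-- A subset `E ⊆ X × X` is an entourage if `sup_{(x,y) ∈ E} d(x,y) < ∞`. -/
def IsEntourage {X : Type*} [MetricSpace X] (E : Set (X × X)) : Prop :=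
  ∃ C : ℝ, ∀ p ∈ E, dist p.1 p.2 ≤ C

/-- `E[S] = {x | ∃ y ∈ S, (x,y) ∈ E}`. -/
def EImage {X : Type*} (E : Set (X × X)) (S : Set X) : Set X :=
  {x | ∃ y ∈ S, (x, y) ∈ E}

/-- Subsets `A, B` are close (`A ≍ B`): there are `R ≥ 0` and a sequence
`(aₙ, bₙ) ∈ A × B` with `d(aₙ, bₙ) ≤ R` and `{aₙ}` unbounded. -/
def Close {X : Type*} [MetricSpace X] (A B : Set X) : Prop :=
  ∃ R : ℝ, 0 ≤ R ∧ ∃ a b : ℕ → X, (∀ n, a n ∈ A) ∧ (∀ n, b n ∈ B) ∧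
    (∀ n, dist (a n) (b n) ≤ R) ∧ ¬ Bornology.IsBounded (Set.range a)

/-- `A ≍_f B` iff there do not exist `A' ⊇ A`, `B' ⊇ B` with `A' ∪ B' = X` and `¬(A' ≍ B')`. -/
def CloseF {X : Type*} [MetricSpace X] (A B : Set X) : Prop :=
  ¬ ∃ A' B' : Set X, A ⊆ A' ∧ B ⊆ B' ∧ A' ∪ B' = Set.univ ∧ ¬ Close A' B'

/-- A large-scale proximity relation. -/
structure IsLSP {X : Type*} [MetricSpace X] (r : Set X → Set X → Prop) : Prop where
  not_self_iff_bounded : ∀ B : Set X, (¬ r B B) ↔ Bornology.IsBounded B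
  symm : ∀ A B : Set X, r A B → r B A
  entourage_invariant : ∀ (A A' : Set X) (E : Set (X × X)), IsEntourage E →
    A' ⊆ EImage E A → A ⊆ EImage E A' → ∀ B : Set X, r A B → r A' B
  union_iff : ∀ A B C : Set X, r (A ∪ B) C ↔ (r A C ∨ r B C)
  separation : ∀ A B : Set X, ¬ r A B →
    ∃ C D : Set X, C ∪ D = Set.univ ∧ ¬ r C A ∧ ¬ r D B

/-- An `r`-ultrafilter on `X`. -/
def IsRUltrafilter {X : Type*} (r : Set X → Set X → Prop) (F : Set (Set X)) : Prop :=
  (∀ A ∈ F, ∀ B ∈ F, r A B) ∧ (∀ A B : Set X, A ∪ B ∈ F → A ∈ F ∨ B ∈ F) ∧ Set.univ ∈ F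

/-- A compactification `i : X → X̄` is coarse if for every entourage `E`, the closure of
`(i × i)(E)` meets `(∂X × X̄) ∪ (X̄ × ∂X)` only inside the diagonal over `∂X = X̄ ∖ i(X)`. -/
def IsCoarseCompactification {X Xb : Type*} [MetricSpace X] [TopologicalSpace Xb]
    (i : X → Xb) : Prop :=
  ∀ E : Set (X × X), IsEntourage E →
    closure ((fun p : X × X => (i p.1, i p.2)) '' E) ∩
      (((Set.range i)ᶜ ×ˢ (Set.univ : Set Xb)) ∪ ((Set.univ : Set Xb) ×ˢ (Set.range i)ᶜ)) ⊆
      {q : Xb × Xb | q.1 = q.2 ∧ q.1 ∈ (Set.range i)ᶜ}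

/-- A Higson function: bounded, continuous, and for every entourage `E` and `ε > 0`
there is a bounded set `B` outside of which the variation on `E` is `< ε`. -/
def IsHigson {X : Type*} [MetricSpace X] (φ : X → ℝ) : Prop :=
  Continuous φ ∧ (∃ C : ℝ, ∀ x, |φ x| ≤ C) ∧
  ∀ E : Set (X × X), IsEntourage E → ∀ ε > (0:ℝ), ∃ B : Set X, Bornology.IsBounded B ∧
    ∀ p ∈ E, (p.1 ∉ B ∨ p.2 ∉ B) → |φ p.1 - φ p.2| < ε

/-- A coarse map: coarsely uniform and coarsely proper. -/
def IsCoarseMap {X Y : Type*} [MetricSpace X] [MetricSpace Y] (f : X → Y) : Prop :=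
  (∀ E : Set (X × X), IsEntourage E →
    IsEntourage ((fun p : X × X => (f p.1, f p.2)) '' E)) ∧
  (∀ S : Set Y, Bornology.IsBounded S → Bornology.IsBounded (f ⁻¹' S))

/-- The Gromov product `(x|y)_w`. -/
noncomputable def gromovProd {X : Type*} [MetricSpace X] (w x y : X) : ℝ :=
  (dist x w + dist y w - dist x y) / 2

/-- `X` is a geodesic metric space. -/
def IsGeodesicSpace (X : Type*) [MetricSpace X] : Prop :=
  ∀ x y : X, ∃ γ : ℝ → X, γ 0 = x ∧ γ (dist x y) = y ∧
    ∀ s ∈ Set.Icc (0:ℝ) (dist x y), ∀ t ∈ Set.Icc (0:ℝ) (dist x y),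
      dist (γ s) (γ t) = |s - t|

/-- a clopen subset of the boundary of a coarse compactification is
separated from its complement by a non-close decomposition of `X`. -/
theorem clopen_boundary_separation {X Xb : Type*} [MetricSpace X] [ProperSpace X]
    [TopologicalSpace Xb] [CompactSpace Xb] [T2Space Xb]
    (i : X → Xb) (hi : IsOpenEmbedding i) (hd : DenseRange i)
    (hc : IsCoarseCompactification i)
    (π : Set Xb) (hπ : π ⊆ (Set.range i)ᶜ)
    (hopen : IsOpen (Subtype.val ⁻¹' π : Set ((Set.range i)ᶜ : Set Xb)))
    (hclosed : IsClosed (Subtype.val ⁻¹' π : Set ((Set.range i)ᶜ : Set Xb))) :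
    ∃ C D : Set X, C ∪ D = Set.univ ∧ ¬ Close C D ∧
      π ⊆ closure (i '' C) ∧ ((Set.range i)ᶜ \ π) ⊆ closure (i '' D) := by
  classical
  have hbd_closed : IsClosed ((Set.range i)ᶜ : Set Xb) := hi.isOpen_range.isClosed_compl
  haveI : CompactSpace ((Set.range i)ᶜ : Set Xb) :=
    isCompact_iff_compactSpace.mp hbd_closed.isCompact
  -- π is compact
  have hπcpt : IsCompact π := by
    have h1 : IsCompact (Subtype.val ⁻¹' π : Set ((Set.range i)ᶜ : Set Xb)) :=
      hclosed.isCompact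
    have h2 := h1.image continuous_subtype_val
    rwa [Set.image_preimage_eq_inter_range, Subtype.range_coe,
      Set.inter_eq_self_of_subset_left hπ] at h2
  -- the complement of π in the boundary is compact
  have hπccpt : IsCompact ((Set.range i)ᶜ \ π) := by
    have h1 : IsCompact (Subtype.val ⁻¹' ((Set.range i)ᶜ \ π) :
        Set ((Set.range i)ᶜ : Set Xb)) := by
      have : (Subtype.val ⁻¹' ((Set.range i)ᶜ \ π) : Set ((Set.range i)ᶜ : Set Xb)) =
          (Subtype.val ⁻¹' π)ᶜ := by
        rw [Set.preimage_diff, Subtype.coe_preimage_self]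
        ext x; simp
      rw [this]
      exact hopen.isClosed_compl.isCompact
    have h2 := h1.image continuous_subtype_val
    rwa [Set.image_preimage_eq_inter_range, Subtype.range_coe,
      Set.inter_eq_self_of_subset_left Set.diff_subset] at h2
  -- separate by disjoint open sets
  obtain ⟨U, V, hUo, hVo, hπU, hπcV, hUV⟩ :=
    SeparatedNhds.of_isCompact_isCompact hπcpt hπccpt Set.disjoint_sdiff_right
  -- π is closed
  have hπ_closed : IsClosed π := hπcpt.isClosed
  have hπc_closed : IsClosed ((Set.range i)ᶜ \ π) := hπccpt.isClosed
  -- shrink to sets with closures inside U, V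
  obtain ⟨U', hU'o, hπU', hU'cl⟩ := normal_exists_closure_subset hπ_closed hUo hπU
  obtain ⟨V', hV'o, hπcV', hV'cl⟩ := normal_exists_closure_subset hπc_closed hVo hπcV
  have hU'V' : Disjoint U' V' :=
    Set.disjoint_of_subset (subset_closure.trans hU'cl) (subset_closure.trans hV'cl) hUV
  -- the decomposition
  refine ⟨i ⁻¹' U', (i ⁻¹' U')ᶜ, Set.union_compl_self _, ?_, ?_, ?_⟩
  · -- ¬ Close
    rintro ⟨R, hR0, a, b, haC, hbD, hab, hunb⟩
    -- extract an escaping subsequence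
    have hesc : ∀ k : ℕ, ∃ n : ℕ, (k : ℝ) < dist (a n) (a 0) := by
      intro k
      by_contra hcon
      push_neg at hcon
      refine hunb (Metric.isBounded_closedBall (x := a 0) (r := k) |>.subset ?_)
      rintro _ ⟨n, rfl⟩
      exact Metric.mem_closedBall.mpr (hcon n)
    choose n hn using hesc
    set a' : ℕ → X := fun k => a (n k) with ha'
    set b' : ℕ → X := fun k => b (n k) with hb'
    -- an ultrafilter refining atTop
    set F : Ultrafilter ℕ := Ultrafilter.of Filter.atTop with hF
    have hFle : (F : Filter ℕ) ≤ Filter.atTop := Ultrafilter.of_le _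
    -- limit points
    obtain ⟨p, -, hp⟩ := isCompact_univ.ultrafilter_le_nhds (F.map (fun k => i (a' k)))
      (Filter.le_principal_iff.mpr Filter.univ_mem)
    obtain ⟨q, -, hq⟩ := isCompact_univ.ultrafilter_le_nhds (F.map (fun k => i (b' k)))
      (Filter.le_principal_iff.mpr Filter.univ_mem)
    have hpt : Filter.Tendsto (fun k => i (a' k)) F (nhds p) := hp
    have hqt : Filter.Tendsto (fun k => i (b' k)) F (nhds q) := hq
    -- the entourage
    set E : Set (X × X) := Set.range (fun k => (a' k, b' k)) with hE
    have hEent : IsEntourage E := by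
      refine ⟨R, ?_⟩
      rintro _ ⟨k, rfl⟩
      exact hab (n k)
    -- (p, q) is in the closure of the image of E
    have hpq_mem : (p, q) ∈ closure ((fun pr : X × X => (i pr.1, i pr.2)) '' E) := by
      refine mem_closure_of_tendsto (hpt.prodMk_nhds hqt) ?_
      refine Filter.Eventually.of_forall fun k => ?_
      exact ⟨(a' k, b' k), ⟨k, rfl⟩, rfl⟩
    -- p is a boundary point
    have hpbd : p ∈ (Set.range i)ᶜ := by
      intro hpr
      obtain ⟨x, rfl⟩ := hpr
      have hWo : IsOpen (i '' Metric.ball x 1) := hi.isOpenMap _ Metric.isOpen_ball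
      have hpW : i x ∈ i '' Metric.ball x 1 :=
        ⟨x, Metric.mem_ball_self one_pos, rfl⟩
      have hev1 : ∀ᶠ k in (F : Filter ℕ), i (a' k) ∈ i '' Metric.ball x 1 :=
        hpt.eventually (hWo.mem_nhds hpW)
      have hev2 : ∀ᶠ k in (F : Filter ℕ), (⌈dist x (a 0) + 1⌉₊ : ℕ) ≤ k :=
        hFle (Filter.eventually_atTop.mpr ⟨_, fun k hk => hk⟩)
      obtain ⟨k, hk1, hk2⟩ := (hev1.and hev2).exists
      obtain ⟨y, hy, hyx⟩ := hk1
      have hyk : a' k ∈ Metric.ball x 1 := hi.injective hyx ▸ hy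
      have h1 : dist (a' k) x < 1 := Metric.mem_ball.mp hyk
      have h2 : (k : ℝ) < dist (a' k) (a 0) := hn k
      have h3 : dist x (a 0) + 1 ≤ (k : ℝ) := by
        calc dist x (a 0) + 1 ≤ (⌈dist x (a 0) + 1⌉₊ : ℝ) := Nat.le_ceil _
          _ ≤ (k : ℝ) := by exact_mod_cast hk2
      have h4 : dist (a' k) (a 0) ≤ dist (a' k) x + dist x (a 0) := dist_triangle _ _ _
      linarith
    -- apply coarseness
    have hdiag := hc E hEent ⟨hpq_mem, Or.inl (Set.mem_prod.mpr ⟨hpbd, trivial⟩)⟩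
    obtain ⟨hpeq, -⟩ := hdiag
    -- p ∈ closure U'
    have hpU' : p ∈ closure U' :=
      mem_closure_of_tendsto hpt (Filter.Eventually.of_forall fun k => haC (n k))
    -- the "middle" region is bounded
    have hLsub : ((U' ∪ V')ᶜ : Set Xb) ⊆ Set.range i := by
      intro x hx
      by_contra hxr
      have : x ∈ π ∪ ((Set.range i)ᶜ \ π) := by
        by_cases hxπ : x ∈ π
        · exact Or.inl hxπ
        · exact Or.inr ⟨hxr, hxπ⟩
      rcases this with h | h
      · exact hx (Or.inl (hπU' h))
      · exact hx (Or.inr (hπcV' h))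
    have hLcpt : IsCompact ((U' ∪ V')ᶜ : Set Xb) := ((hU'o.union hV'o).isClosed_compl).isCompact
    have hKcpt : IsCompact (i ⁻¹' (U' ∪ V')ᶜ) :=
      hi.isInducing.isCompact_preimage' hLcpt hLsub
    obtain ⟨M, hM⟩ := hKcpt.isBounded.subset_closedBall (a 0)
    -- q ∈ closure V'
    have hqV' : q ∈ closure V' := by
      refine mem_closure_of_tendsto hqt ?_
      have hev : ∀ᶠ k in (F : Filter ℕ), (⌈M + R⌉₊ + 1 : ℕ) ≤ k :=
        hFle (Filter.eventually_atTop.mpr ⟨_, fun k hk => hk⟩)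
      refine hev.mono fun k hk => ?_
      have hkR : M + R < (k : ℝ) := by
        calc M + R ≤ (⌈M + R⌉₊ : ℝ) := Nat.le_ceil _
          _ < (⌈M + R⌉₊ : ℝ) + 1 := by linarith
          _ ≤ (k : ℝ) := by exact_mod_cast hk
      have hdb : M < dist (b' k) (a 0) := by
        have h1 : (k : ℝ) < dist (a' k) (a 0) := hn k
        have h2 : dist (a' k) (a 0) ≤ dist (a' k) (b' k) + dist (b' k) (a 0) :=
          dist_triangle _ _ _
        have h3 : dist (a' k) (b' k) ≤ R := hab (n k)
        linarith
      have hbK : b' k ∉ i ⁻¹' (U' ∪ V')ᶜ := by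
        intro hmem
        have := hM hmem
        rw [Metric.mem_closedBall] at this
        linarith
      have hbUV : i (b' k) ∈ U' ∪ V' := by
        by_contra hcon
        exact hbK hcon
      rcases hbUV with h | h
      · exact absurd h (hbD (n k))
      · exact h
    -- contradiction
    have hpU : p ∈ U := hU'cl hpU'
    have hqV : q ∈ V := hV'cl hqV'
    rw [show p = q from hpeq] at hpU
    exact Set.disjoint_left.mp hUV hpU hqV
  · -- π ⊆ closure (i '' C)
    intro x hx
    have h1 := hd.open_subset_closure_inter hU'o (hπU' hx)
    rwa [Set.image_preimage_eq_inter_range]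
  · -- boundary minus π ⊆ closure (i '' D)
    intro x hx
    have h1 := hd.open_subset_closure_inter hV'o (hπcV' hx)
    have h2 : V' ∩ Set.range i ⊆ i '' (i ⁻¹' U')ᶜ := by
      rintro y ⟨hyV, z, rfl⟩
      refine ⟨z, ?_, rfl⟩
      intro hzU
      exact Set.disjoint_left.mp hU'V' hzU hyV
    exact closure_mono h2 h1
end

section
/- Let α : X → Y be a coarse map between metric spaces. Then for all subsets A, B ⊆ X, A ≍_f B implies α(A) ≍_f α(B). -/
open Topology

/-- coarse maps preserve the relation `≍_f`. -/
theorem coarseMap_preserves_closeF {X Y : Type*} [MetricSpace X] [MetricSpace Y]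
    (α : X → Y) (hα : IsCoarseMap α) :
    ∀ A B : Set X, CloseF A B → CloseF (α '' A) (α '' B) := by
  intro A B hAB ⟨A', B', hA', hB', huniv, hnc⟩
  apply hAB
  refine ⟨α ⁻¹' A', α ⁻¹' B', ?_, ?_, ?_, ?_⟩
  · intro x hx; exact hA' ⟨x, hx, rfl⟩
  · intro x hx; exact hB' ⟨x, hx, rfl⟩
  · ext x; simp only [Set.mem_union, Set.mem_preimage, iff_true, Set.mem_univ]
    have := huniv ▸ Set.mem_univ (α x)
    exact this
  · rintro ⟨R, hR, a, b, ha, hb, hd, hub⟩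
    apply hnc
    obtain ⟨C, hC⟩ := hα.1 {p | ∃ n, p = (a n, b n)} ⟨R, by
      rintro p ⟨n, rfl⟩; exact hd n⟩
    refine ⟨max C 0, le_max_right _ _, α ∘ a, α ∘ b, fun n => ha n, fun n => hb n,
      fun n => ?_, fun hbd => ?_⟩
    · exact le_max_of_le_left (hC (α (a n), α (b n)) ⟨(a n, b n), ⟨n, rfl⟩, rfl⟩)
    · apply hub
      have : Set.range a ⊆ α ⁻¹' (Set.range (α ∘ a)) := by
        rintro x ⟨n, rfl⟩; exact ⟨n, rfl⟩
      exact (hα.2 _ hbd).subset this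
end

section
/- Let X be a metric space with basepoint x₀ and let φ : X → ℝ be a bounded continuous Freudenthal function. Let F and G be ultrafilters on X such that A ≍_f B holds for every A ∈ F and B ∈ G. If φ tends to a ∈ ℝ along F and to b ∈ ℝ along G, then a = b. -/
open Topology

/-- a Freudenthal function has equal limits along ultrafilters that are
`≍_f`-related. -/
theorem freudenthal_limits_eq {X : Type*} [MetricSpace X] (x₀ : X)
    (φ : X → ℝ) (hφc : Continuous φ) (hφb : ∃ C : ℝ, ∀ x, |φ x| ≤ C)
    (hφf : ∀ R ≥ (0:ℝ), ∃ K ≥ (0:ℝ), ∀ x y : X,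
      dist x y ≤ R → K ≤ dist x₀ x → K ≤ dist x₀ y → φ x = φ y)
    (F G : Ultrafilter X) (hFG : ∀ A ∈ F, ∀ B ∈ G, CloseF A B)
    (a b : ℝ) (ha : Filter.Tendsto φ F (nhds a)) (hb : Filter.Tendsto φ G (nhds b)) :
    a = b := by
  by_contra hab
  have habs : 0 < |a - b| := abs_pos.mpr (sub_ne_zero.mpr hab)
  set ε : ℝ := |a - b| / 4 with hε_def
  have hε : 0 < ε := by positivity
  have hA : φ ⁻¹' Metric.closedBall a ε ∈ F :=
    ha (Metric.closedBall_mem_nhds a hε)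
  have hB : φ ⁻¹' Metric.closedBall b ε ∈ G :=
    hb (Metric.closedBall_mem_nhds b hε)
  apply hFG _ hA _ hB
  refine ⟨(φ ⁻¹' Metric.closedBall a ε) ∪ (φ ⁻¹' Metric.closedBall b ε)ᶜ,
    φ ⁻¹' Metric.closedBall b ε, Set.subset_union_left, subset_rfl, ?_, ?_⟩
  · ext x
    simp only [Set.mem_union, Set.mem_compl_iff, Set.mem_preimage, Set.mem_univ, iff_true]
    tauto
  · rintro ⟨R, hR, u, v, hu, hv, hd, hub⟩
    obtain ⟨K, hK, hfr⟩ := hφf R hR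
    have : ∃ n, K + R < dist x₀ (u n) := by
      by_contra h
      push_neg at h
      apply hub
      apply Bornology.IsBounded.subset (Metric.isBounded_closedBall (x := x₀) (r := K + R))
      rintro _ ⟨n, rfl⟩
      simpa [Metric.mem_closedBall, dist_comm] using h n
    obtain ⟨n, hn⟩ := this
    have h1 : K ≤ dist x₀ (u n) := by linarith
    have h2 : K ≤ dist x₀ (v n) := by
      have t := dist_triangle x₀ (u n) (v n)
      have t2 := dist_triangle x₀ (v n) (u n)
      have hduv := hd n
      have : dist (v n) (u n) = dist (u n) (v n) := dist_comm _ _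
      linarith
    have heq : φ (u n) = φ (v n) := hfr _ _ (hd n) h1 h2
    have hvB : dist (φ (v n)) b ≤ ε := hv n
    rcases hu n with h | h
    · have huA : dist (φ (u n)) a ≤ ε := h
      have : dist a b ≤ dist a (φ (u n)) + dist (φ (u n)) b := dist_triangle _ _ _
      rw [dist_comm a (φ (u n))] at this
      have hub' : dist (φ (u n)) b ≤ ε := heq ▸ hvB
      have hd_ab : dist a b = |a - b| := Real.dist_eq a b
      linarith
    · exact h (show dist (φ (u n)) b ≤ ε from heq ▸ hvB)
end

section
/- Let X be a proper geodesic metric space that is δ-hyperbolic for some δ ≥ 0, with basepoint x₀ ∈ X, and let A, B ⊆ X be subsets with A ≍ B. Then A ≍_g B: there exist sequences (aᵢ) in A and (bⱼ) in B such that for every M ≥ 0 there is N with (aᵢ | bⱼ)_{x₀} ≥ M for all i, j ≥ N. -/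
open Topology

open Filter Metric

lemma gromovProd_comm {X : Type*} [MetricSpace X] (w x y : X) :
    gromovProd w x y = gromovProd w y x := by
  unfold gromovProd; rw [dist_comm x y]; ring


/-- in a proper geodesic hyperbolic space, `A ≍ B` implies `A ≍_g B`. -/
theorem close_implies_gromov_close {X : Type*} [MetricSpace X] [ProperSpace X]
    (hgeo : IsGeodesicSpace X) (δ : ℝ) (hδ : 0 ≤ δ)
    (hhyp : ∀ w x y z : X,
      gromovProd w x y ≥ min (gromovProd w x z) (gromovProd w z y) - δ)
    (x₀ : X) (A B : Set X) (h : Close A B) :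
    ∃ a b : ℕ → X, (∀ i, a i ∈ A) ∧ (∀ j, b j ∈ B) ∧
      ∀ M ≥ (0:ℝ), ∃ N : ℕ, ∀ i ≥ N, ∀ j ≥ N, gromovProd x₀ (a i) (b j) ≥ M := by
  obtain ⟨R, hR, a, b, ha, hb, hab, hub⟩ := h
  -- from unboundedness, extract indices with large distance to x₀
  have hx : ∀ C : ℝ, ∃ n, C < dist (a n) x₀ := by
    intro C
    by_contra hcon
    push_neg at hcon
    exact hub ((isBounded_iff_subset_closedBall x₀).mpr
      ⟨C, by rintro _ ⟨n, rfl⟩; exact hcon n⟩)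
  set m : ℕ → ℕ := fun i => (hx i).choose with hm
  have hmd : ∀ i : ℕ, (i : ℝ) < dist (a (m i)) x₀ := fun i => (hx i).choose_spec
  set A' : ℕ → X := fun i => a (m i) with hA'
  set B' : ℕ → X := fun i => b (m i) with hB'
  set d : ℕ → ℝ := fun i => dist x₀ (A' i) with hd
  have hd0 : ∀ i, 0 ≤ d i := fun i => dist_nonneg
  -- geodesics from x₀ to A' i
  set γ : ℕ → ℝ → X := fun i => (hgeo x₀ (A' i)).choose with hγ
  have hγ0 : ∀ i, γ i 0 = x₀ := fun i => (hgeo x₀ (A' i)).choose_spec.1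
  have hγd : ∀ i, γ i (d i) = A' i := fun i => (hgeo x₀ (A' i)).choose_spec.2.1
  have hγiso : ∀ i, ∀ s ∈ Set.Icc (0:ℝ) (d i), ∀ t ∈ Set.Icc (0:ℝ) (d i),
      dist (γ i s) (γ i t) = |s - t| := fun i => (hgeo x₀ (A' i)).choose_spec.2.2
  set p : ℕ → ℕ → X := fun i k => γ i (min (k : ℝ) (d i)) with hp
  have hmem : ∀ i (k : ℕ), min (k : ℝ) (d i) ∈ Set.Icc (0:ℝ) (d i) :=
    fun i k => ⟨le_min (Nat.cast_nonneg k) (hd0 i), min_le_right _ _⟩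
  have hmem0 : ∀ i, (0:ℝ) ∈ Set.Icc (0:ℝ) (d i) := fun i => ⟨le_refl _, hd0 i⟩
  have hmemd : ∀ i, d i ∈ Set.Icc (0:ℝ) (d i) := fun i => ⟨hd0 i, le_refl _⟩
  have hp_dist0 : ∀ i (k : ℕ), dist (p i k) x₀ = min (k : ℝ) (d i) := by
    intro i k
    have := hγiso i _ (hmem i k) 0 (hmem0 i)
    rw [hγ0 i] at this
    rw [hp]; simp only
    rw [this, sub_zero, abs_of_nonneg (le_min (Nat.cast_nonneg k) (hd0 i))]
  have hp_distA : ∀ i (k : ℕ), dist (p i k) (A' i) = d i - min (k : ℝ) (d i) := by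
    intro i k
    have := hγiso i _ (hmem i k) (d i) (hmemd i)
    rw [hγd i] at this
    rw [hp]; simp only
    rw [this, abs_of_nonpos (by linarith [min_le_right (k:ℝ) (d i)])]
    ring
  have hprod : ∀ i (k : ℕ), gromovProd x₀ (A' i) (p i k) = min (k : ℝ) (d i) := by
    intro i k
    have h1 := hp_dist0 i k
    have h2 := hp_distA i k
    have h3 : dist (A' i) x₀ = d i := dist_comm x₀ (A' i) ▸ rfl
    rw [gromovProd, h1, h3, dist_comm (A' i) (p i k), h2]
    ring
  -- compactness: diagonal extraction via product of closed balls
  haveI : ∀ k : ℕ, CompactSpace (Metric.closedBall x₀ (k : ℝ)) :=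
    fun k => isCompact_iff_compactSpace.mp (isCompact_closedBall x₀ _)
  have hFmem : ∀ i (k : ℕ), p i k ∈ Metric.closedBall x₀ (k : ℝ) := by
    intro i k
    rw [Metric.mem_closedBall, hp_dist0 i k]
    exact min_le_left _ _
  set F : ℕ → ∀ k : ℕ, Metric.closedBall x₀ (k : ℝ) := fun i k => ⟨p i k, hFmem i k⟩ with hF
  obtain ⟨L, φ, hφ, hconv⟩ := CompactSpace.tendsto_subseq F
  set q : ℕ → X := fun k => (L k : X) with hq
  have hk_conv : ∀ k, Tendsto (fun i => p (φ i) k) atTop (𝓝 (q k)) := by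
    intro k
    have := (continuous_apply k).continuousAt.tendsto.comp hconv
    exact (continuous_subtype_val.continuousAt.tendsto.comp this)
  have hφge : ∀ i, i ≤ φ i := fun i => hφ.le_apply
  have hdge : ∀ i : ℕ, (i : ℝ) < d (φ i) := by
    intro i
    calc (i : ℝ) ≤ (φ i : ℝ) := Nat.cast_le.mpr (hφge i)
    _ < dist (a (m (φ i))) x₀ := hmd (φ i)
    _ = d (φ i) := (dist_comm x₀ _ ▸ rfl)
  -- key estimate toward the boundary point q k
  have key : ∀ k : ℕ, ∃ I : ℕ, ∀ i ≥ I,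
      gromovProd x₀ (A' (φ i)) (q k) ≥ (k : ℝ) - 1 - δ := by
    intro k
    have hminev : ∀ i ≥ k, min (k : ℝ) (d (φ i)) = (k : ℝ) := by
      intro i hi
      exact min_eq_left (le_of_lt (lt_of_le_of_lt (Nat.cast_le.mpr hi) (hdge i)))
    have ht1 : Tendsto (fun i => dist (p (φ i) k) x₀) atTop (𝓝 (dist (q k) x₀)) :=
      (hk_conv k).dist tendsto_const_nhds
    have ht2 : Tendsto (fun i => dist (p (φ i) k) (q k)) atTop (𝓝 0) := by
      have := (hk_conv k).dist (tendsto_const_nhds (x := q k))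
      simpa using this
    have hev : (fun i => dist (p (φ i) k) x₀) =ᶠ[atTop] (fun _ => (k : ℝ)) := by
      filter_upwards [eventually_ge_atTop k] with i hi
      rw [hp_dist0, hminev i hi]
    have hqk : dist (q k) x₀ = (k : ℝ) :=
      tendsto_nhds_unique ht1 (tendsto_const_nhds.congr' hev.symm)
    have hlim : Tendsto (fun i => gromovProd x₀ (p (φ i) k) (q k)) atTop (𝓝 (k : ℝ)) := by
      have : Tendsto (fun i =>
          (dist (p (φ i) k) x₀ + dist (q k) x₀ - dist (p (φ i) k) (q k)) / 2) atTop
          (𝓝 ((dist (q k) x₀ + dist (q k) x₀ - 0) / 2)) :=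
        ((ht1.add tendsto_const_nhds).sub ht2).div_const 2
      have heq : ((dist (q k) x₀ + dist (q k) x₀ - 0) / 2) = (k : ℝ) := by
        rw [hqk]; ring
      rw [heq] at this
      exact this.congr fun i => by rw [gromovProd]
    have hev2 : ∀ᶠ i in atTop, gromovProd x₀ (p (φ i) k) (q k) > (k : ℝ) - 1 :=
      hlim.eventually (eventually_gt_nhds (by linarith))
    obtain ⟨I, hI⟩ := (hev2.and (eventually_ge_atTop k)).exists_forall_of_atTop
    refine ⟨I, fun i hi => ?_⟩
    obtain ⟨h1, h2⟩ := hI i hi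
    have h3 := hhyp x₀ (A' (φ i)) (q k) (p (φ i) k)
    have h4 : gromovProd x₀ (A' (φ i)) (p (φ i) k) = (k : ℝ) := by
      rw [hprod, hminev i h2]
    rcases min_cases (gromovProd x₀ (A' (φ i)) (p (φ i) k))
        (gromovProd x₀ (p (φ i) k) (q k)) with ⟨he, _⟩ | ⟨he, _⟩ <;>
      rw [he] at h3 <;> linarith
  -- conclude
  refine ⟨fun i => A' (φ i), fun j => B' (φ j), fun i => ha _, fun j => hb _, ?_⟩
  intro M hM
  set k : ℕ := ⌈M + 1 + 3 * δ⌉₊ with hk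
  have hkge : (k : ℝ) ≥ M + 1 + 3 * δ := Nat.le_ceil _
  obtain ⟨I, hI⟩ := key k
  set N : ℕ := max I ⌈M + δ + R⌉₊ with hN
  refine ⟨N, fun i hi j hj => ?_⟩
  have hAi : gromovProd x₀ (A' (φ i)) (q k) ≥ (k : ℝ) - 1 - δ :=
    hI i (le_trans (le_max_left _ _) hi)
  have hAj : gromovProd x₀ (A' (φ j)) (q k) ≥ (k : ℝ) - 1 - δ :=
    hI j (le_trans (le_max_left _ _) hj)
  -- (aSeq i | aSeq j) ≥ k - 1 - 2δ
  have step3 : gromovProd x₀ (A' (φ i)) (A' (φ j)) ≥ (k : ℝ) - 1 - 2 * δ := by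
    have h3 := hhyp x₀ (A' (φ i)) (A' (φ j)) (q k)
    rw [gromovProd_comm x₀ (q k) (A' (φ j))] at h3
    rcases min_cases (gromovProd x₀ (A' (φ i)) (q k))
        (gromovProd x₀ (A' (φ j)) (q k)) with ⟨he, _⟩ | ⟨he, _⟩ <;>
      rw [he] at h3 <;> linarith
  -- (aSeq j | bSeq j) ≥ M + δ
  have step4 : gromovProd x₀ (A' (φ j)) (B' (φ j)) ≥ M + δ := by
    have h1 : dist (A' (φ j)) x₀ > (j : ℝ) := by
      have := hmd (φ j)
      have h2 : (j : ℝ) ≤ (φ j : ℝ) := Nat.cast_le.mpr (hφge j)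
      exact lt_of_le_of_lt h2 this
    have h2 : dist (A' (φ j)) (B' (φ j)) ≤ R := hab (m (φ j))
    have h3 : dist (B' (φ j)) x₀ ≥ dist (A' (φ j)) x₀ - dist (A' (φ j)) (B' (φ j)) := by
      have := dist_triangle (A' (φ j)) (B' (φ j)) x₀
      linarith
    have hNj : (j : ℝ) ≥ M + δ + R := by
      calc (j : ℝ) ≥ (N : ℝ) := Nat.cast_le.mpr hj
      _ ≥ (⌈M + δ + R⌉₊ : ℝ) := Nat.cast_le.mpr (le_max_right _ _)
      _ ≥ M + δ + R := Nat.le_ceil _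
    rw [gromovProd]
    linarith
  have h5 := hhyp x₀ (A' (φ i)) (B' (φ j)) (A' (φ j))
  rw [gromovProd_comm x₀ (A' (φ i)) (A' (φ j))] at step3
  rcases min_cases (gromovProd x₀ (A' (φ i)) (A' (φ j)))
      (gromovProd x₀ (A' (φ j)) (B' (φ j))) with ⟨he, _⟩ | ⟨he, _⟩ <;>
    rw [he] at h5
  · rw [gromovProd_comm x₀ (A' (φ i)) (A' (φ j))] at h5
    linarith
  · linarith
end
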